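/- arXiv:1509.03485 — 2 statements merged into one kernel-verified Lean document; each statement's English description precedes it below -/
import Mathlib

section
/- Fix real ω with e^{iω} ≠ 1, and let c̃_k(ω) be the Taylor coefficients of z ↦ 1/(1 - e^{z+iω}) at z = 0, i.e. 1/(1 - e^{z+iω}) = Σ_{k≥0} c̃_k(ω) z^k for |z| small. Then the function - sinh z / (2(cosh z - cos ω)) has Taylor expansion at 0 containing only odd powers of z, with coefficients c̃_{2k+1}(ω); in particular, c̃_{2k+1}(ω) is real for every k ≥ 0. -/
open Complex FormalMultilinearSeries

/-- A convergent power series on a ball gives a `HasFPowerSeriesAt`. -/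
lemma aux_hasFPowerSeriesAt {a : ℕ → ℂ} {g : ℂ → ℂ} {r : ℝ} (hr : 0 < r)
    (h : ∀ z : ℂ, ‖z‖ < r → HasSum (fun n => a n * z ^ n) (g z)) :
    HasFPowerSeriesAt g (ofScalars ℂ a) 0 := by
  have hr2 : (0 : ℝ) < r / 2 := by linarith
  refine ⟨ENNReal.ofReal (r / 2), ?_, by simpa using hr2, ?_⟩
  · -- radius bound
    have hsum : Summable fun n => ‖ofScalars ℂ a n‖ * (r / 2) ^ n := by
      have hlt : ‖((r / 2 : ℝ) : ℂ)‖ < r := by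
        rw [Complex.norm_real, Real.norm_of_nonneg hr2.le]; linarith
      have := (h ((r / 2 : ℝ) : ℂ) hlt).summable
      have h2 : Summable fun n => ‖a n * ((r / 2 : ℝ) : ℂ) ^ n‖ :=
        (summable_norm_iff).mpr this
      refine h2.congr fun n => ?_
      rw [norm_mul, norm_pow, Complex.norm_real, Real.norm_of_nonneg hr2.le,
        ofScalars_norm]
    have := FormalMultilinearSeries.le_radius_of_summable_norm (ofScalars ℂ a)
      (r := ⟨r / 2, hr2.le⟩) (by exact hsum)
    rwa [ENNReal.ofReal, Real.toNNReal_of_nonneg hr2.le]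
  · intro y hy
    have hy' : ‖y‖ < r := by
      rw [EMetric.mem_ball, edist_zero_right, ENNReal.lt_ofReal_iff_toReal_lt
        (by simp)] at hy
      have : ‖y‖ < r / 2 := by simpa using hy
      linarith
    have := h y hy'
    simp only [zero_add]
    refine this.congr_fun fun n => ?_
    rw [ofScalars_apply_eq, smul_eq_mul]

theorem stmt_10 (ω : ℝ) (hω : Complex.exp (Complex.I * ω) ≠ 1)
    (c : ℕ → ℂ) (r : ℝ) (hr : 0 < r)
    (hc : ∀ z : ℂ, ‖z‖ < r →
      HasSum (fun k : ℕ => c k * z ^ k) (1 / (1 - Complex.exp (z + Complex.I * ω)))) :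
    (∃ r' > 0, ∀ z : ℂ, ‖z‖ < r' →
        HasSum (fun k : ℕ => c (2 * k + 1) * z ^ (2 * k + 1))
          (- Complex.sinh z / (2 * (Complex.cosh z - Complex.cos ω))))
      ∧ ∀ k : ℕ, (c (2 * k + 1)).im = 0 := by
  -- Step 1: find δ > 0 on which 1 - exp(z + Iω) ≠ 0
  have hω0 : (1 : ℂ) - Complex.exp (Complex.I * ω) ≠ 0 := sub_ne_zero.mpr (Ne.symm hω)
  have hcont : ContinuousAt (fun z : ℂ => 1 - Complex.exp (z + Complex.I * ω)) 0 :=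
    (continuous_const.sub (Complex.continuous_exp.comp (continuous_id.add
      continuous_const))).continuousAt
  obtain ⟨δ, hδ0, hδ⟩ := Metric.continuousAt_iff.mp hcont
    ‖(1 : ℂ) - Complex.exp (Complex.I * ω)‖ (norm_pos_iff.mpr hω0)
  have hne : ∀ z : ℂ, ‖z‖ < δ → 1 - Complex.exp (z + Complex.I * ω) ≠ 0 := by
    intro z hz hzero
    have := hδ (by simpa [dist_eq_norm] using hz)
    rw [hzero] at this
    simp only [zero_add, dist_eq_norm, zero_sub, norm_neg] at this
    exact absurd this (lt_irrefl _)
  set r' : ℝ := min r δ with hr'def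
  have hr'0 : 0 < r' := lt_min hr hδ0
  -- the main sum statement
  have key : ∀ z : ℂ, ‖z‖ < r' →
      HasSum (fun k : ℕ => c (2 * k + 1) * z ^ (2 * k + 1))
        (- Complex.sinh z / (2 * (Complex.cosh z - Complex.cos ω))) := by
    intro z hz
    have hzr : ‖z‖ < r := lt_of_lt_of_le hz (min_le_left _ _)
    have hzδ : ‖z‖ < δ := lt_of_lt_of_le hz (min_le_right _ _)
    have h1 := hc z hzr
    have h2 := hc (-z) (by rwa [norm_neg])
    have hz1 : 1 - Complex.exp (z + Complex.I * ω) ≠ 0 := hne z hzδ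
    have hz2 : 1 - Complex.exp (-z + Complex.I * ω) ≠ 0 := hne (-z) (by rwa [norm_neg])
    have hez : Complex.exp z ≠ 0 := Complex.exp_ne_zero z
    have heiω : Complex.exp (Complex.I * ω) ≠ 0 := Complex.exp_ne_zero _
    set A := Complex.exp z with hA
    set B := Complex.exp (Complex.I * ω) with hB
    have e1 : Complex.cosh z = (A + A⁻¹)/2 := by
      rw [Complex.cosh, Complex.exp_neg]
    have e2 : Complex.sinh z = (A - A⁻¹)/2 := by
      rw [Complex.sinh, Complex.exp_neg]
    have e3 : Complex.cos ω = (B + B⁻¹)/2 := by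
      rw [Complex.cos, show (-(ω:ℂ))*Complex.I = -(Complex.I*ω) by ring,
        show ((ω:ℂ))*Complex.I = Complex.I*ω by ring, Complex.exp_neg, ← hB, add_comm]
    have f1 : Complex.exp (z + Complex.I * ω) = A * B := by rw [Complex.exp_add]
    have f2 : Complex.exp (-z + Complex.I * ω) = A⁻¹ * B := by
      rw [Complex.exp_add, Complex.exp_neg]
    rw [f1] at hz1 h1
    rw [f2] at hz2 h2
    -- denominator nonzero
    have hprod : (1 - A * B) * (1 - A⁻¹ * B) = B * (B + B⁻¹ - A - A⁻¹) := by
      field_simp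
      ring
    have hd : (A + A⁻¹)/2 - (B + B⁻¹)/2 ≠ 0 := by
      intro h
      have h0 : B + B⁻¹ - A - A⁻¹ = 0 := by linear_combination (-2 : ℂ) * h
      rw [h0, mul_zero] at hprod
      exact (mul_ne_zero hz1 hz2) hprod
    have hd' : Complex.cosh z - Complex.cos ω ≠ 0 := by rw [e1, e3]; exact hd
    -- value identity
    have hval : (1 / (1 - A * B) - 1 / (1 - A⁻¹ * B)) / 2
        = - Complex.sinh z / (2 * (Complex.cosh z - Complex.cos ω)) := by
      rw [e1, e2, e3]
      have hd2 : 2 * ((A + A⁻¹)/2 - (B + B⁻¹)/2) ≠ 0 := mul_ne_zero two_ne_zero hd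
      rw [div_sub_div _ _ hz1 hz2, div_div, div_eq_div_iff
        (mul_ne_zero (mul_ne_zero hz1 hz2) two_ne_zero) hd2]
      field_simp
      ring
    have h3 : HasSum (fun k : ℕ => (c k * z ^ k - c k * (-z) ^ k) / 2)
        ((1 / (1 - A * B) - 1 / (1 - A⁻¹ * B)) / 2) := (h1.sub h2).div_const 2
    rw [hval] at h3
    -- restrict to odd indices
    have hinj : Function.Injective (fun k : ℕ => 2 * k + 1) := by
      intro a b hab; simp only at hab; omega
    rw [← Function.Injective.hasSum_iff hinj ?_] at h3
    · refine h3.congr_fun fun k => ?_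
      simp only [Function.comp_apply]
      rw [show (-z) ^ (2 * k + 1) = -z ^ (2 * k + 1) from Odd.neg_pow ⟨k, by ring⟩ z]
      ring
    · intro n hn
      have heven : Even n := by
        rcases Nat.even_or_odd n with h | h
        · exact h
        · obtain ⟨m, hm⟩ := h
          exact absurd ⟨m, by simp; omega⟩ hn
      rw [heven.neg_pow]
      simp
  refine ⟨⟨r', hr'0, key⟩, ?_⟩
  -- Step 2: reality of the coefficients
  set a : ℕ → ℂ := fun n => if Odd n then c n else 0 with ha
  set g : ℂ → ℂ := fun z => - Complex.sinh z / (2 * (Complex.cosh z - Complex.cos ω)) with hg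
  have hsum_a : ∀ z : ℂ, ‖z‖ < r' → HasSum (fun n => a n * z ^ n) (g z) := by
    intro z hz
    have hks := key z hz
    have hinj : Function.Injective (fun k : ℕ => 2 * k + 1) := by
      intro x y h; simp only at h; omega
    rw [← Function.Injective.hasSum_iff hinj ?_]
    · refine hks.congr_fun fun k => ?_
      simp only [Function.comp_apply, ha]
      rw [if_pos ⟨k, by ring⟩]
    · intro n hn
      have hodd : ¬ Odd n := by
        rintro ⟨m, hm⟩
        exact hn ⟨m, by simp; omega⟩
      simp [ha, hodd]
  have hsum_ca : ∀ z : ℂ, ‖z‖ < r' →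
      HasSum (fun n => (starRingEnd ℂ) (a n) * z ^ n) (g z) := by
    intro z hz
    have hconj : ‖(starRingEnd ℂ) z‖ < r' := by rwa [RCLike.norm_conj]
    have hmap := (hsum_a _ hconj).mapL (Complex.conjCLE.toContinuousLinearMap)
    have heq : (starRingEnd ℂ) (g ((starRingEnd ℂ) z)) = g z := by
      simp only [hg, map_div₀, map_neg, map_mul, map_sub, map_ofNat]
      rw [← Complex.sinh_conj, ← Complex.cosh_conj, Complex.conj_conj,
        ← Complex.cos_conj, Complex.conj_ofReal]
    simp only [ContinuousLinearEquiv.coe_coe, Complex.conjCLE_apply, map_mul, map_pow,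
      Complex.conj_conj] at hmap
    rwa [heq] at hmap
  have hp1 : HasFPowerSeriesAt g (ofScalars ℂ a) 0 := aux_hasFPowerSeriesAt hr'0 hsum_a
  have hp2 : HasFPowerSeriesAt g (ofScalars ℂ (fun n => (starRingEnd ℂ) (a n))) 0 :=
    aux_hasFPowerSeriesAt hr'0 hsum_ca
  have heq := hp1.eq_formalMultilinearSeries hp2
  have haeq : a = fun n => (starRingEnd ℂ) (a n) :=
    FormalMultilinearSeries.ofScalars_series_injective ℂ ℂ heq
  intro k
  have h1 : a (2 * k + 1) = (starRingEnd ℂ) (a (2 * k + 1)) := congrFun haeq (2 * k + 1)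
  have h2 : a (2 * k + 1) = c (2 * k + 1) := by
    simp only [ha]; exact if_pos ⟨k, by ring⟩
  rw [h2] at h1
  exact Complex.conj_eq_iff_im.mp h1.symm
end

section
/- Fix real ω with e^{iω} ≠ 1, and define c̃_k(ω) by 1/(1 - e^{z+iω}) = Σ_{k≥0} c̃_k(ω) z^k near z = 0. Then for each k ≥ 1, the coefficient c̃_{2k}(ω) is purely imaginary (its real part is zero), and c̃_0(ω) has real part 1/2. -/
open Complex Filter

theorem stmt_12 (ω : ℝ) (hω : Complex.exp (Complex.I * ω) ≠ 1)
    (c : ℕ → ℂ) (r : ℝ) (hr : 0 < r)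
    (hc : ∀ z : ℂ, ‖z‖ < r →
      HasSum (fun k : ℕ => c k * z ^ k) (1 / (1 - Complex.exp (z + Complex.I * ω)))) :
    (∀ k : ℕ, 1 ≤ k → (c (2 * k)).re = 0) ∧ (c 0).re = 1 / 2 := by
  set a : ℕ → ℂ := fun k => c k + (-1) ^ k * (starRingEnd ℂ) (c k) with ha
  have hE1 : ∀ x : ℝ, Complex.exp (↑x + Complex.I * ω) ≠ 1 := by
    intro x h
    have habs := congrArg (fun z : ℂ => ‖z‖) h
    rw [Complex.norm_exp] at habs
    have hre : ((x : ℂ) + Complex.I * ω).re = x := by simp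
    rw [hre, norm_one] at habs
    have hx0 : x = 0 := Real.exp_eq_exp.mp (by rw [habs, Real.exp_zero])
    apply hω
    simpa [hx0] using h
  have key : ∀ x : ℝ, |x| < r → HasSum (fun k => a k * (x : ℂ) ^ k) 1 := by
    intro x hx
    have hx' : ‖(x : ℂ)‖ < r := by simpa using hx
    have h1 := hc x hx'
    have h2 := (hc (-(x : ℂ)) (by simpa using hx)).star
    have hfun : (fun k => star (c k * (-(x : ℂ)) ^ k)) =
        fun k => (-1) ^ k * (starRingEnd ℂ) (c k) * (x : ℂ) ^ k := by
      funext k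
      simp only [star_mul', star_pow, star_neg, RCLike.star_def, Complex.conj_ofReal]
      rw [neg_pow]
      ring
    have hconjarg : (starRingEnd ℂ) (-(x : ℂ) + Complex.I * ω) = -(x : ℂ) - Complex.I * ω := by
      simp [Complex.conj_ofReal]
      ring
    have hvalstar : star (1 / (1 - Complex.exp (-(x : ℂ) + Complex.I * ω))) =
        1 / (1 - Complex.exp (-(x : ℂ) - Complex.I * ω)) := by
      rw [star_div₀, star_one, star_sub, star_one, RCLike.star_def, ← Complex.exp_conj, hconjarg]
    rw [hfun, hvalstar] at h2
    have hE : Complex.exp ((x : ℂ) + Complex.I * ω) ≠ 1 := hE1 x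
    have hE0 : Complex.exp ((x : ℂ) + Complex.I * ω) ≠ 0 := Complex.exp_ne_zero _
    have hinv : Complex.exp (-(x : ℂ) - Complex.I * ω) =
        (Complex.exp ((x : ℂ) + Complex.I * ω))⁻¹ := by
      rw [← Complex.exp_neg]
      ring_nf
    have hsum := h1.add h2
    have hval : 1 / (1 - Complex.exp ((x : ℂ) + Complex.I * ω)) +
        1 / (1 - Complex.exp (-(x : ℂ) - Complex.I * ω)) = 1 := by
      rw [hinv]
      set E := Complex.exp ((x : ℂ) + Complex.I * ω) with hEdef
      have h1' : 1 - E ≠ 0 := sub_ne_zero.mpr (Ne.symm hE)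
      have e1 : (1 : ℂ) - E⁻¹ = -(1 - E) / E := by
        field_simp
        ring
      rw [e1, one_div_div, div_neg, ← sub_eq_add_neg, div_sub_div_same, div_self h1']
    rw [hval] at hsum
    convert hsum using 2 with k
    ring
  let p : FormalMultilinearSeries ℝ ℝ ℂ := fun k => ContinuousMultilinearMap.mkPiRing ℝ (Fin k) (a k)
  have hpnorm : ∀ k, ‖p k‖ = ‖a k‖ := fun k => ContinuousMultilinearMap.norm_mkPiRing _
  have hrad : ENNReal.ofReal r ≤ p.radius := by
    refine ENNReal.le_of_forall_nnreal_lt fun s hs => ?_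
    have hs' : (s : ℝ) < r := by
      rwa [← ENNReal.ofReal_coe_nnreal, ENNReal.ofReal_lt_ofReal_iff hr] at hs
    have hsum := key s (by simpa [_root_.abs_of_nonneg s.2] using hs')
    refine p.le_radius_of_tendsto (l := 0) ?_
    have h0 := hsum.summable.tendsto_atTop_zero.norm
    simp only [norm_mul, norm_pow, Complex.norm_real, Real.norm_eq_abs,
      _root_.abs_of_nonneg s.2, norm_zero] at h0
    simpa [hpnorm] using h0
  have hps : HasFPowerSeriesOnBall (fun _ : ℝ => (1 : ℂ)) p 0 (ENNReal.ofReal r) := by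
    refine ⟨hrad, by simp [hr], fun {y} hy => ?_⟩
    have hy' : |y| < r := by
      rw [EMetric.mem_ball, edist_zero_right, ← ofReal_norm,
        ENNReal.ofReal_lt_ofReal_iff hr] at hy
      simpa using hy
    have := key y hy'
    convert this using 2 with k
    · rfl
    simp [p, ContinuousMultilinearMap.mkPiRing_apply, Complex.real_smul, mul_comm]
  have hpq : p = constFormalMultilinearSeries ℝ ℝ (1 : ℂ) :=
    hps.hasFPowerSeriesAt.eq_formalMultilinearSeries hasFPowerSeriesAt_const
  have haval : ∀ k, a k = (constFormalMultilinearSeries ℝ ℝ (1 : ℂ) k) (fun _ => (1 : ℝ)) := by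
    intro k
    have := congrArg (fun m => m (fun _ => (1 : ℝ))) (congrFun hpq k)
    simpa [p, ContinuousMultilinearMap.mkPiRing_apply] using this
  have ha0 : a 0 = 1 := by simpa [constFormalMultilinearSeries] using haval 0
  have hak : ∀ k, k ≠ 0 → a k = 0 := by
    intro k hk
    rw [haval k, constFormalMultilinearSeries_apply_of_nonzero hk]
    simp
  constructor
  · intro k hk
    have h : c (2 * k) + (starRingEnd ℂ) (c (2 * k)) = 0 := by
      have h0 := hak (2 * k) (by omega)
      simp only [ha] at h0
      rwa [pow_mul, neg_one_sq, one_pow, one_mul] at h0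
    have hre := congrArg Complex.re h
    simp only [Complex.add_re, Complex.conj_re, Complex.zero_re] at hre
    linarith
  · have h : c 0 + (starRingEnd ℂ) (c 0) = 1 := by
      have h0 := ha0
      simp only [ha] at h0
      rwa [pow_zero, one_mul] at h0
    have hre := congrArg Complex.re h
    simp only [Complex.add_re, Complex.conj_re, Complex.one_re] at hre
    linarith
end
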